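/- arXiv:1509.06213 — 2 statements merged into one kernel-verified Lean document; each statement's English description precedes it below -/
import Mathlib

section
/- Let p be a prime with p ≡ 3 (mod 4), and let G ≤ Sym(F_p) be the group of affine maps z ↦ az + b with a a nonzero square in F_p and b ∈ F_p. Then no non-identity element of G fixes a 2-element subset of F_p setwise. -/
/-- For `p ≡ 3 (mod 4)` prime, no non-identity affine map `z ↦ a z + b` of `𝔽_p` with
`a` a nonzero square fixes a 2-element subset of `𝔽_p` setwise. -/
theorem stmt_5 (p : ℕ) [Fact p.Prime] (hp : p % 4 = 3)
    (a b : ZMod p) (ha : a ≠ 0) (hsq : IsSquare a) (hne : ¬(a = 1 ∧ b = 0))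
    (i j : ZMod p) (hij : i ≠ j) :
    ¬((a * i + b = i ∧ a * j + b = j) ∨ (a * i + b = j ∧ a * j + b = i)) := by
  have hd : i - j ≠ 0 := sub_ne_zero.mpr hij
  rintro (⟨h1, h2⟩ | ⟨h1, h2⟩)
  · have hsub : a * (i - j) = 1 * (i - j) := by linear_combination h1 - h2
    have ha1 : a = 1 := mul_right_cancel₀ hd hsub
    have hb : b = 0 := by
      subst ha1
      linear_combination h1
    exact hne ⟨ha1, hb⟩
  · have hsub : a * (i - j) = -(i - j) := by linear_combination h1 - h2
    have ha1 : a = -1 := by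
      have : a * (i - j) = -1 * (i - j) := by rw [hsub]; ring
      exact mul_right_cancel₀ hd this
    have : IsSquare (-1 : ZMod p) := ha1 ▸ hsq
    rw [ZMod.exists_sq_eq_neg_one_iff] at this
    exact this hp
end

section
/- The permutation group G ≤ S_7 generated by s = (1 2 3)(4 5 6) and t = (1 3 4 2 5 6 7) has order 21, is non-abelian, and no non-identity element of G fixes any 2-element subset of {1,...,7} setwise. -/
set_option maxRecDepth 40000
set_option maxHeartbeats 4000000

def s0 : Equiv.Perm (Fin 7) :=
  ([0, 1, 2] : List (Fin 7)).formPerm * ([3, 4, 5] : List (Fin 7)).formPerm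
def t0 : Equiv.Perm (Fin 7) := ([0, 2, 3, 1, 4, 5, 6] : List (Fin 7)).formPerm

def F : Finset (Equiv.Perm (Fin 7)) :=
  (Finset.univ : Finset (Fin 7 × Fin 3)).image (fun p => t0 ^ (p.1 : ℕ) * s0 ^ (p.2 : ℕ))

lemma s0_cube : s0 ^ 3 = 1 := by decide
lemma t0_seven : t0 ^ 7 = 1 := by decide
lemma st : s0 * t0 = t0 ^ 4 * s0 := by decide

lemma t0_pow_mod (a : ℕ) : t0 ^ a = t0 ^ (a % 7) := by
  conv_lhs => rw [← Nat.div_add_mod a 7]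
  rw [pow_add, pow_mul, t0_seven, one_pow, one_mul]

lemma s0_pow_mod (a : ℕ) : s0 ^ a = s0 ^ (a % 3) := by
  conv_lhs => rw [← Nat.div_add_mod a 3]
  rw [pow_add, pow_mul, s0_cube, one_pow, one_mul]

lemma comm_pow (k : ℕ) : s0 * t0 ^ k = t0 ^ (4 * k) * s0 := by
  induction k with
  | zero => simp
  | succ n ih =>
    rw [pow_succ, ← mul_assoc, ih, mul_assoc, st, ← mul_assoc, ← pow_add]
    have h : 4 * n + 4 = 4 * (n + 1) := by ring
    rw [h]

lemma spow_comm (b : ℕ) : ∀ k : ℕ, s0 ^ b * t0 ^ k = t0 ^ (4 ^ b * k) * s0 ^ b := by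
  induction b with
  | zero => simp
  | succ n ih =>
    intro k
    rw [pow_succ, mul_assoc, comm_pow, ← mul_assoc, ih, ← mul_assoc, ← pow_succ, mul_assoc]

lemma mem_F (a b : ℕ) : t0 ^ a * s0 ^ b ∈ F := by
  apply Finset.mem_image.mpr
  refine ⟨(⟨a % 7, Nat.mod_lt _ (by norm_num)⟩, ⟨b % 3, Nat.mod_lt _ (by norm_num)⟩),
    Finset.mem_univ _, ?_⟩
  show t0 ^ (a % 7) * s0 ^ (b % 3) = _
  rw [← t0_pow_mod, ← s0_pow_mod]

lemma mul_form (a b c d : ℕ) :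
    (t0 ^ a * s0 ^ b) * (t0 ^ c * s0 ^ d) = t0 ^ (a + 4 ^ b * c) * s0 ^ (b + d) := by
  rw [mul_assoc, ← mul_assoc (s0 ^ b), spow_comm, mul_assoc, ← pow_add, ← mul_assoc, ← pow_add]

lemma hmul : ∀ a ∈ F, ∀ b ∈ F, a * b ∈ F := by
  intro a ha b hb
  obtain ⟨p, -, rfl⟩ := Finset.mem_image.mp ha
  obtain ⟨q, -, rfl⟩ := Finset.mem_image.mp hb
  rw [mul_form]; exact mem_F _ _

lemma hinv : ∀ a ∈ F, a⁻¹ ∈ F := by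
  intro a ha
  obtain ⟨p, -, rfl⟩ := Finset.mem_image.mp ha
  have h1 : (t0 ^ (p.1 : ℕ) * s0 ^ (p.2 : ℕ)) *
      (s0 ^ (2 * (p.2 : ℕ)) * t0 ^ (6 * (p.1 : ℕ))) = 1 := by
    calc (t0 ^ (p.1 : ℕ) * s0 ^ (p.2 : ℕ)) * (s0 ^ (2 * (p.2 : ℕ)) * t0 ^ (6 * (p.1 : ℕ)))
        = t0 ^ (p.1 : ℕ) * s0 ^ ((p.2 : ℕ) + 2 * (p.2 : ℕ)) * t0 ^ (6 * (p.1 : ℕ)) := by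
          rw [pow_add]; group
      _ = t0 ^ ((p.1 : ℕ) + 6 * (p.1 : ℕ)) := by
          have h2 : (p.2 : ℕ) + 2 * (p.2 : ℕ) = 3 * (p.2 : ℕ) := by ring
          rw [h2, pow_mul, s0_cube, one_pow, mul_one, ← pow_add]
      _ = 1 := by
          have h3 : (p.1 : ℕ) + 6 * (p.1 : ℕ) = 7 * (p.1 : ℕ) := by ring
          rw [h3, pow_mul, t0_seven, one_pow]
  rw [inv_eq_of_mul_eq_one_right h1, spow_comm]
  exact mem_F _ _

def H : Subgroup (Equiv.Perm (Fin 7)) where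
  carrier := ↑F
  one_mem' := by simpa using mem_F 0 0
  mul_mem' := fun ha hb => hmul _ ha _ hb
  inv_mem' := fun ha => hinv _ ha

lemma hsF : s0 ∈ F := by simpa using mem_F 0 1
lemma htF : t0 ∈ F := by simpa using mem_F 1 0

lemma closure_eq : Subgroup.closure ({s0, t0} : Set (Equiv.Perm (Fin 7))) = H := by
  apply le_antisymm
  · rw [Subgroup.closure_le]
    intro x hx
    rcases hx with h | h
    · exact show x ∈ F by rw [h]; exact hsF
    · exact show x ∈ F by rw [Set.mem_singleton_iff.mp h]; exact htF
  · intro x hx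
    obtain ⟨p, -, rfl⟩ := Finset.mem_image.mp (show x ∈ F from hx)
    exact mul_mem (pow_mem (Subgroup.subset_closure (by right; rfl)) _)
      (pow_mem (Subgroup.subset_closure (by left; rfl)) _)

lemma card_F : F.card = 21 := by decide

lemma key' : ∀ p : Fin 7 × Fin 3, ∀ i j : Fin 7, i ≠ j →
    (t0 ^ (p.1 : ℕ) * s0 ^ (p.2 : ℕ) = 1) ∨
    ¬(((t0 ^ (p.1 : ℕ) * s0 ^ (p.2 : ℕ)) i = i ∧ (t0 ^ (p.1 : ℕ) * s0 ^ (p.2 : ℕ)) j = j) ∨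
      ((t0 ^ (p.1 : ℕ) * s0 ^ (p.2 : ℕ)) i = j ∧ (t0 ^ (p.1 : ℕ) * s0 ^ (p.2 : ℕ)) j = i)) := by
  decide

lemma key : ∀ g ∈ F, g ≠ 1 → ∀ i j : Fin 7, i ≠ j →
    ¬((g i = i ∧ g j = j) ∨ (g i = j ∧ g j = i)) := by
  intro g hg hne i j hij
  obtain ⟨p, -, rfl⟩ := Finset.mem_image.mp hg
  rcases key' p i j hij with h | h
  · exact absurd h hne
  · exact h

lemma noncomm : s0 * t0 ≠ t0 * s0 := by decide

set_option maxHeartbeats 800000 in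
/-- The subgroup of `S_7` generated by `s = (1 2 3)(4 5 6)` and `t = (1 3 4 2 5 6 7)`
(0-indexed: `(0 1 2)(3 4 5)` and `(0 2 3 1 4 5 6)`) has order 21, is non-abelian, and no
non-identity element fixes any 2-element subset of the 7 points setwise. -/
theorem stmt_8
    (s t : Equiv.Perm (Fin 7))
    (hs : s = ([0, 1, 2] : List (Fin 7)).formPerm * ([3, 4, 5] : List (Fin 7)).formPerm)
    (ht : t = ([0, 2, 3, 1, 4, 5, 6] : List (Fin 7)).formPerm)
    (G : Subgroup (Equiv.Perm (Fin 7))) (hG : G = Subgroup.closure {s, t}) :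
    Nat.card G = 21 ∧ (¬ ∀ x y : G, x * y = y * x) ∧
      ∀ g ∈ G, g ≠ 1 → ∀ i j : Fin 7, i ≠ j →
        ¬((g i = i ∧ g j = j) ∨ (g i = j ∧ g j = i)) := by
  have hGH : G = H := by rw [hG, hs, ht]; exact closure_eq
  subst hGH
  refine ⟨?_, ?_, ?_⟩
  · have h1 : Nat.card H = (F : Set (Equiv.Perm (Fin 7))).ncard :=
      (Nat.card_coe_set_eq _)
    rw [h1, Set.ncard_coe_finset, card_F]
  · intro h
    have h2 := Subtype.ext_iff.mp (h ⟨s0, hsF⟩ ⟨t0, htF⟩)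
    simp only [Subgroup.coe_mul] at h2
    exact noncomm h2
  · intro g hg hne i j hij
    exact key g hg hne i j hij
end
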